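/- Assume in addition that the R-modules H^0(P, D) and H^1(P, D) have finite length. Then for every even integer n with n ≤ a − 2, the R-modules H^n(T, D) and H^{n+1}(T, D) have finite length, and length_R H^n(T, D) − length_R H^{n+1}(T, D) = length_R H^0(P, D) − length_R H^1(P, D). In particular the difference length_R H^n(T) − length_R H^{n+1}(T) is independent of the even integer n ≤ a − 2. (This is the algebraic content of the paper's proof that the degree of the difference of the stable Tors — the Kato–Saito localized intersection number — is computed by the Euler characteristic of the folded two-periodic complex, i.e. of the associated matrix factorization.) -/

import Mathlib

open DirectSum

set_option synthInstance.maxHeartbeats 1000000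
set_option maxHeartbeats 1000000

/-- Cast of a `ℤ`-indexed family of modules along an equality of indices. -/
def lcast (R : Type) [CommRing R] (C : ℤ → Type) [∀ j, AddCommGroup (C j)]
    [∀ j, Module R (C j)] {j j' : ℤ} (e : j = j') : C j →ₗ[R] C j' := by
  subst e; exact LinearMap.id

/-- The totalization `T^n = ⊕_{i ≥ 0} M^{n+2i}`. -/
abbrev Ttot (M : ℤ → Type) [∀ j, AddCommGroup (M j)] (n : ℤ) : Type :=
  ⨁ (i : ℕ), M (n + 2 * (i : ℤ))

/-- The folded object `P^n = ⊕_{i ∈ ℤ} M^{n+2i}`. -/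
abbrev Ptot (M : ℤ → Type) [∀ j, AddCommGroup (M j)] (n : ℤ) : Type :=
  ⨁ (i : ℤ), M (n + 2 * i)

/-- The degree-one map `D = d + h` on the totalization `T`:  out of the summand
`M^{n+2i}` it is the sum of `d` (landing in summand `i`) and `h` (landing in
summand `i - 1`; for `i = 0` there is no such summand and the `h`-component is zero). -/
noncomputable def DT (R : Type) [CommRing R] (M : ℤ → Type) [∀ j, AddCommGroup (M j)]
    [∀ j, Module R (M j)]
    (d : ∀ j, M j →ₗ[R] M (j + 1)) (h : ∀ j, M j →ₗ[R] M (j - 1)) (n : ℤ) :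
    Ttot M n →ₗ[R] Ttot M (n + 1) :=
  DirectSum.toModule R ℕ (Ttot M (n + 1)) (fun i =>
    ((DirectSum.lof R ℕ (fun i : ℕ => M (n + 1 + 2 * (i : ℤ))) i).comp
      ((lcast R M (show n + 2 * (i : ℤ) + 1 = n + 1 + 2 * (i : ℤ) by ring)).comp
        (d (n + 2 * (i : ℤ)))))
    +
    (match i with
     | 0 => 0
     | (k + 1) =>
        (DirectSum.lof R ℕ (fun i : ℕ => M (n + 1 + 2 * (i : ℤ))) k).comp
          ((lcast R M (show n + 2 * ((k + 1 : ℕ) : ℤ) - 1 = n + 1 + 2 * (k : ℤ) by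
              push_cast; ring)).comp
            (h (n + 2 * ((k + 1 : ℕ) : ℤ))))))

/-- The degree-one map `D = d + h` on the folded object `P`: out of the summand
`M^{n+2i}` it is the sum of `d` (landing in summand `i`) and `h` (landing in
summand `i - 1`). -/
noncomputable def DP (R : Type) [CommRing R] (M : ℤ → Type) [∀ j, AddCommGroup (M j)]
    [∀ j, Module R (M j)]
    (d : ∀ j, M j →ₗ[R] M (j + 1)) (h : ∀ j, M j →ₗ[R] M (j - 1)) (n : ℤ) :
    Ptot M n →ₗ[R] Ptot M (n + 1) :=
  DirectSum.toModule R ℤ (Ptot M (n + 1)) (fun i =>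
    ((DirectSum.lof R ℤ (fun i : ℤ => M (n + 1 + 2 * i)) i).comp
      ((lcast R M (show n + 2 * i + 1 = n + 1 + 2 * i by ring)).comp (d (n + 2 * i))))
    +
    ((DirectSum.lof R ℤ (fun i : ℤ => M (n + 1 + 2 * i)) (i - 1)).comp
      ((lcast R M (show n + 2 * i - 1 = n + 1 + 2 * (i - 1) by ring)).comp (h (n + 2 * i)))))

/-- The `n`-th cohomology of a `ℤ`-graded object equipped with degree-one maps
`D n : C^n → C^{n+1}`: the kernel of `D n` modulo the image of `D (n-1)`. -/
abbrev coh (R : Type) [CommRing R] {C : ℤ → Type} [∀ j, AddCommGroup (C j)]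
    [∀ j, Module R (C j)] (D : ∀ n, C n →ₗ[R] C (n + 1)) (n : ℤ) : Type :=
  ↥(LinearMap.ker (D n)) ⧸
    (Submodule.comap (LinearMap.ker (D n)).subtype
      (LinearMap.range ((lcast R C (show n - 1 + 1 = n by ring)).comp (D (n - 1)))))

section Helpers

variable (R : Type) [CommRing R] (C : ℤ → Type) [∀ j, AddCommGroup (C j)]
  [∀ j, Module R (C j)]

lemma lcast_lcast {j j' j'' : ℤ} (e : j = j') (e' : j' = j'') (x : C j) :
    lcast R C e' (lcast R C e x) = lcast R C (e.trans e') x := by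
  subst e; subst e'; rfl

lemma lof_lcast_eq {ι : Type} [DecidableEq ι] (f : ι → ℤ) {p q : ι} (hpq : p = q)
    {j : ℤ} (e : j = f p) (e' : j = f q) (x : C j) :
    DirectSum.lof R ι (fun i => C (f i)) p (lcast R C e x)
      = DirectSum.lof R ι (fun i => C (f i)) q (lcast R C e' x) := by
  subst hpq; subst e; rfl

lemma lof_subsingleton {ι : Type} [DecidableEq ι] (f : ι → ℤ) (p : ι)
    (hs : Subsingleton (C (f p))) (x : C (f p)) :
    DirectSum.lof R ι (fun i => C (f i)) p x = 0 := by
  rw [Subsingleton.elim x 0, map_zero]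

end Helpers

section Maps

variable (R : Type) [CommRing R] (M : ℤ → Type) [∀ j, AddCommGroup (M j)]
  [∀ j, Module R (M j)]
  (d : ∀ j, M j →ₗ[R] M (j + 1)) (h : ∀ j, M j →ₗ[R] M (j - 1))

lemma d_lcast {j j' : ℤ} (e : j = j') (x : M j) :
    d j' (lcast R M e x) = lcast R M (show j + 1 = j' + 1 by rw [e]) (d j x) := by
  subst e; rfl

lemma h_lcast {j j' : ℤ} (e : j = j') (x : M j) :
    h j' (lcast R M e x) = lcast R M (show j - 1 = j' - 1 by rw [e]) (h j x) := by
  subst e; rfl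

/-- The comparison map `T^m → P^{m'}` where `m = m' + 2c`. -/
noncomputable def Emap (m m' c : ℤ) (hm : m = m' + 2 * c) :
    Ttot M m →ₗ[R] Ptot M m' :=
  DirectSum.toModule R ℕ (Ptot M m') fun i =>
    (DirectSum.lof R ℤ (fun j : ℤ => M (m' + 2 * j)) ((i : ℤ) + c)).comp
      (lcast R M (show m + 2 * (i : ℤ) = m' + 2 * ((i : ℤ) + c) by omega))

/-- The inverse comparison map `P^{m'} → T^m`. -/
noncomputable def Fmap (m m' c : ℤ) (hm : m = m' + 2 * c) :
    Ptot M m' →ₗ[R] Ttot M m :=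
  DirectSum.toModule R ℤ (Ttot M m) fun i =>
    if hi : 0 ≤ i - c then
      (DirectSum.lof R ℕ (fun k : ℕ => M (m + 2 * (k : ℤ))) (i - c).toNat).comp
        (lcast R M (show m' + 2 * i = m + 2 * ((i - c).toNat : ℤ) by
          rw [Int.toNat_of_nonneg hi]; omega))
    else 0

lemma Fmap_Emap (m m' c : ℤ) (hm : m = m' + 2 * c) :
    (Fmap R M m m' c hm).comp (Emap R M m m' c hm) = LinearMap.id := by
  apply DirectSum.linearMap_ext
  intro i
  ext x : 1
  simp only [LinearMap.comp_apply, Emap, DirectSum.toModule_lof, LinearMap.id_apply, Fmap]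
  rw [dif_pos (show (0:ℤ) ≤ (i:ℤ) + c - c by omega)]
  simp only [LinearMap.comp_apply]
  rw [lcast_lcast]
  refine lof_lcast_eq R M (fun k : ℕ => m + 2 * (k : ℤ)) ?_ _ rfl x
  omega

lemma Emap_Fmap (m m' c : ℤ) (hm : m = m' + 2 * c)
    (hvan : ∀ i : ℤ, i < 0 → Subsingleton (M (m + 2 * i))) :
    (Emap R M m m' c hm).comp (Fmap R M m m' c hm) = LinearMap.id := by
  apply DirectSum.linearMap_ext
  intro i
  ext x : 1
  simp only [LinearMap.comp_apply, Fmap, DirectSum.toModule_lof, LinearMap.id_apply]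
  by_cases hi : 0 ≤ i - c
  · rw [dif_pos hi]
    simp only [LinearMap.comp_apply, Emap]
    rw [DirectSum.toModule_lof]
    simp only [LinearMap.comp_apply]
    rw [lcast_lcast]
    refine lof_lcast_eq R M (fun j : ℤ => m' + 2 * j) ?_ _ rfl x
    rw [Int.toNat_of_nonneg hi]; omega
  · rw [dif_neg hi]
    simp only [LinearMap.zero_apply, map_zero]
    refine (lof_subsingleton R M (fun j : ℤ => m' + 2 * j) i ?_ x).symm
    show Subsingleton (M (m' + 2 * i))
    rw [show m' + 2 * i = m + 2 * (i - c) by omega]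
    exact hvan _ (by omega)

end Maps

section Squares

variable (R : Type) [CommRing R] (M : ℤ → Type) [∀ j, AddCommGroup (M j)]
  [∀ j, Module R (M j)]
  (d : ∀ j, M j →ₗ[R] M (j + 1)) (h : ∀ j, M j →ₗ[R] M (j - 1))

lemma Emap_comm (m m' c : ℤ) (hm : m = m' + 2 * c) (hm1 : m + 1 = m' + 1 + 2 * c)
    (hss : Subsingleton (M (m - 1))) :
    (Emap R M (m + 1) (m' + 1) c hm1).comp (DT R M d h m)
      = (DP R M d h m').comp (Emap R M m m' c hm) := by
  apply DirectSum.linearMap_ext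
  intro i
  ext x
  simp only [LinearMap.comp_apply, DT, Emap, DP, DirectSum.toModule_lof,
    LinearMap.add_apply, map_add]
  cases i with
  | zero =>
    simp only [LinearMap.comp_apply, LinearMap.zero_apply, map_zero, add_zero,
      DirectSum.toModule_lof]
    rw [d_lcast R M d, lcast_lcast, lcast_lcast, h_lcast R M h, lcast_lcast]
    have hsub : Subsingleton (M (m' + 1 + 2 * (((0:ℕ):ℤ) + c - 1))) := by
      rw [show m' + 1 + 2 * (((0:ℕ):ℤ) + c - 1) = m - 1 by push_cast; omega]; exact hss
    rw [lof_subsingleton R M (fun j : ℤ => m' + 1 + 2 * j) (((0:ℕ):ℤ) + c - 1) hsub, add_zero]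
  | succ k =>
    simp only [LinearMap.comp_apply, DirectSum.toModule_lof]
    rw [d_lcast R M d, lcast_lcast, lcast_lcast, h_lcast R M h, lcast_lcast, lcast_lcast]
    congr 1
    rw [add_right_inj]
    refine lof_lcast_eq R M (fun j : ℤ => m' + 1 + 2 * j) ?_ _ _ (h _ x)
    push_cast; omega

lemma Emap_cast {m1 m2 m1' m2' c : ℤ} (e : m1 = m2) (e' : m1' = m2')
    (h1 : m1 = m1' + 2 * c) (h2 : m2 = m2' + 2 * c) :
    (Emap R M m2 m2' c h2).comp (lcast R (fun k => Ttot M k) e)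
      = (lcast R (fun k => Ptot M k) e').comp (Emap R M m1 m1' c h1) := by
  subst e; subst e'; rfl

end Squares

section Quot

variable {R : Type} [CommRing R] {A B C A' B' C' : Type}
  [AddCommGroup A] [Module R A] [AddCommGroup B] [Module R B]
  [AddCommGroup C] [Module R C] [AddCommGroup A'] [Module R A']
  [AddCommGroup B'] [Module R B'] [AddCommGroup C'] [Module R C']

/-- An equivalence of two-step complexes induces an equivalence of the middle
cohomologies. -/
noncomputable def cohMapEquiv (f : A →ₗ[R] B) (g : B →ₗ[R] C)
    (f' : A' →ₗ[R] B') (g' : B' →ₗ[R] C')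
    (eA : A ≃ₗ[R] A') (eB : B ≃ₗ[R] B') (eC : C ≃ₗ[R] C')
    (hf : (eB.toLinearMap).comp f = f'.comp eA.toLinearMap)
    (hg : (eC.toLinearMap).comp g = g'.comp eB.toLinearMap) :
    (↥(LinearMap.ker g) ⧸
        (Submodule.comap (LinearMap.ker g).subtype (LinearMap.range f))) ≃ₗ[R]
    (↥(LinearMap.ker g') ⧸
        (Submodule.comap (LinearMap.ker g').subtype (LinearMap.range f'))) := by
  have hker' : LinearMap.ker g = Submodule.comap eB.toLinearMap (LinearMap.ker g') := by
    rw [← LinearMap.ker_comp, ← hg, LinearMap.ker_comp, eC.ker, Submodule.comap_bot]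
  have hker : (LinearMap.ker g).map (eB : B →ₗ[R] B') = LinearMap.ker g' := by
    rw [hker', Submodule.map_comap_eq, LinearEquiv.range, top_inf_eq]
  have hrange : (LinearMap.range f).map (eB : B →ₗ[R] B') = LinearMap.range f' := by
    rw [← LinearMap.range_comp, hf, LinearMap.range_comp_of_range_eq_top _ eA.range]
  refine Submodule.Quotient.equiv _ _ (eB.ofSubmodules _ _ hker) ?_
  ext y
  simp only [Submodule.mem_map, Submodule.mem_comap, Submodule.coe_subtype]
  constructor
  · rintro ⟨x, hx, rfl⟩
    change eB (x : B) ∈ LinearMap.range f'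
    rw [← hrange]
    exact Submodule.mem_map_of_mem hx
  · intro hy
    rw [← hrange] at hy
    obtain ⟨b, hb, hby⟩ := hy
    have hbker : b ∈ LinearMap.ker g := by
      rw [hker']
      simp only [Submodule.mem_comap, LinearEquiv.coe_coe, LinearMap.mem_ker] at *
      rw [hby]
      exact y.2
    refine ⟨⟨b, hbker⟩, hb, ?_⟩
    apply Subtype.ext
    change eB b = (y : B')
    exact hby

end Quot

section Series

variable {R : Type} [CommRing R] {N N' : Type}
  [AddCommGroup N] [Module R N] [AddCommGroup N'] [Module R N']

/-- Transport a composition series of submodules along a linear equivalence. -/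
noncomputable def csMap (E : N ≃ₗ[R] N') (s : CompositionSeries (Submodule R N)) :
    CompositionSeries (Submodule R N') where
  length := s.length
  toFun := fun i => (Submodule.orderIsoMapComap E) (s.toFun i)
  step := fun i => by
    have := s.step i
    exact (apply_covBy_apply_iff (Submodule.orderIsoMapComap E)).mpr this

lemma csMap_head (E : N ≃ₗ[R] N') (s : CompositionSeries (Submodule R N))
    (hs : s.head = ⊥) : (csMap E s).head = ⊥ := by
  have : (csMap E s).head = (Submodule.orderIsoMapComap E) s.head := rfl
  rw [this, hs]
  exact (Submodule.orderIsoMapComap E).map_bot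

lemma csMap_last (E : N ≃ₗ[R] N') (s : CompositionSeries (Submodule R N))
    (hs : s.last = ⊤) : (csMap E s).last = ⊤ := by
  have : (csMap E s).last = (Submodule.orderIsoMapComap E) s.last := rfl
  rw [this, hs]
  exact (Submodule.orderIsoMapComap E).map_top

/-- All composition series (from `⊥` to `⊤`) of modules related by a linear
equivalence have the same length. -/
lemma cs_length_eq (E : N ≃ₗ[R] N')
    (s : CompositionSeries (Submodule R N)) (s' : CompositionSeries (Submodule R N'))
    (h1 : s.head = ⊥) (h2 : s.last = ⊤) (h1' : s'.head = ⊥) (h2' : s'.last = ⊤) :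
    s.length = s'.length := by
  have := CompositionSeries.jordan_holder (csMap E s) s'
    (by rw [csMap_head E s h1, h1']) (by rw [csMap_last E s h2, h2'])
  exact this.length_eq

end Series

section CohEquiv

variable (R : Type) [CommRing R] (M : ℤ → Type) [∀ j, AddCommGroup (M j)]
  [∀ j, Module R (M j)]
  (d : ∀ j, M j →ₗ[R] M (j + 1)) (h : ∀ j, M j →ₗ[R] M (j - 1))

/-- The equivalence between summands of `T` and `P`. -/
noncomputable def Eequiv (m m' c : ℤ) (hm : m = m' + 2 * c)
    (hvan : ∀ i : ℤ, i < 0 → Subsingleton (M (m + 2 * i))) :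
    Ttot M m ≃ₗ[R] Ptot M m' :=
  LinearEquiv.ofLinear (Emap R M m m' c hm) (Fmap R M m m' c hm)
    (Emap_Fmap R M m m' c hm hvan) (Fmap_Emap R M m m' c hm)

/-- The comparison equivalence on cohomology. -/
noncomputable def cohEquiv (m m' c : ℤ)
    (h0 : m - 1 = m' - 1 + 2 * c) (h1 : m = m' + 2 * c) (h2 : m + 1 = m' + 1 + 2 * c)
    (hssA : Subsingleton (M (m - 1 - 1))) (hssB : Subsingleton (M (m - 1)))
    (hvA : ∀ i : ℤ, i < 0 → Subsingleton (M (m - 1 + 2 * i)))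
    (hvB : ∀ i : ℤ, i < 0 → Subsingleton (M (m + 2 * i)))
    (hvC : ∀ i : ℤ, i < 0 → Subsingleton (M (m + 1 + 2 * i))) :
    coh R (DT R M d h) m ≃ₗ[R] coh R (DP R M d h) m' := by
  have hmid : m - 1 + 1 = (m' - 1 + 1) + 2 * c := by omega
  refine cohMapEquiv
    ((lcast R (fun k => Ttot M k) (show m - 1 + 1 = m by ring)).comp (DT R M d h (m - 1)))
    (DT R M d h m)
    ((lcast R (fun k => Ptot M k) (show m' - 1 + 1 = m' by ring)).comp (DP R M d h (m' - 1)))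
    (DP R M d h m')
    (Eequiv R M (m - 1) (m' - 1) c h0 hvA)
    (Eequiv R M m m' c h1 hvB)
    (Eequiv R M (m + 1) (m' + 1) c h2 hvC)
    ?_ ?_
  · apply LinearMap.ext; intro x
    have h1x := LinearMap.congr_fun
      (Emap_cast R M (show m - 1 + 1 = m by ring) (show m' - 1 + 1 = m' by ring) hmid h1)
      ((DT R M d h (m - 1)) x)
    have h2x := LinearMap.congr_fun
      (Emap_comm R M d h (m - 1) (m' - 1) c h0 hmid hssA) x
    simp only [LinearMap.comp_apply] at h1x h2x ⊢
    show (Emap R M m m' c h1) _ = (lcast R (fun k => Ptot M k) _) ((DP R M d h (m' - 1))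
      ((Emap R M (m - 1) (m' - 1) c h0) x))
    rw [h1x, h2x]
  · apply LinearMap.ext; intro x
    have h3x := LinearMap.congr_fun (Emap_comm R M d h m m' c h1 h2 hssB) x
    simp only [LinearMap.comp_apply] at h3x ⊢
    exact h3x

end CohEquiv

/-- Assume that the `R`-modules `H^0(P, D)` and `H^1(P, D)` have finite
length.  Then for every even integer `n ≤ a - 2` the `R`-modules `H^n(T, D)` and
`H^{n+1}(T, D)` have finite length, and
`length H^n(T) - length H^{n+1}(T) = length H^0(P) - length H^1(P)`;
lengths are expressed via (arbitrary) composition series of the corresponding modules,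
so in particular the difference is independent of the even integer `n ≤ a - 2`. -/
theorem euler_characteristic_of_stable_cohomology_eq_euler_characteristic_of_folded
    (R : Type) [CommRing R] (a b : ℤ) (hab : a ≤ b)
    (M : ℤ → Type) [∀ j, AddCommGroup (M j)] [∀ j, Module R (M j)]
    (d : ∀ j, M j →ₗ[R] M (j + 1)) (h : ∀ j, M j →ₗ[R] M (j - 1))
    (hMa : ∀ j, j < a → Subsingleton (M j))
    (hMb : ∀ j, b < j → Subsingleton (M j))
    (hdd : ∀ j, (d (j + 1)).comp (d j) = 0)
    (hhh : ∀ j, (h (j - 1)).comp (h j) = 0)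
    (hdh : ∀ j,
      (lcast R M (show j - 1 + 1 = j by ring)).comp ((d (j - 1)).comp (h j))
        + (lcast R M (show j + 1 - 1 = j by ring)).comp ((h (j + 1)).comp (d j)) = 0)
    (hfin0 : IsFiniteLength R (coh R (DP R M d h) 0))
    (hfin1 : IsFiniteLength R (coh R (DP R M d h) 1)) :
    ∀ n : ℤ, Even n → n ≤ a - 2 →
      IsFiniteLength R (coh R (DT R M d h) n) ∧
      IsFiniteLength R (coh R (DT R M d h) (n + 1)) ∧
      (∀ (sT : CompositionSeries (Submodule R (coh R (DT R M d h) n)))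
         (sT' : CompositionSeries (Submodule R (coh R (DT R M d h) (n + 1))))
         (sP0 : CompositionSeries (Submodule R (coh R (DP R M d h) 0)))
         (sP1 : CompositionSeries (Submodule R (coh R (DP R M d h) 1))),
        sT.head = ⊥ → sT.last = ⊤ →
        sT'.head = ⊥ → sT'.last = ⊤ →
        sP0.head = ⊥ → sP0.last = ⊤ →
        sP1.head = ⊥ → sP1.last = ⊤ →
        (sT.length : ℤ) - (sT'.length : ℤ) = (sP0.length : ℤ) - (sP1.length : ℤ)) := by
  intro n hn hna
  obtain ⟨c, hc⟩ := hn
  have hc2 : n = 2 * c := by omega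
  have E0 : coh R (DT R M d h) n ≃ₗ[R] coh R (DP R M d h) 0 :=
    cohEquiv R M d h n 0 c (by omega) (by omega) (by omega)
      (hMa _ (by omega)) (hMa _ (by omega))
      (fun i hi => hMa _ (by omega)) (fun i hi => hMa _ (by omega))
      (fun i hi => hMa _ (by omega))
  have E1 : coh R (DT R M d h) (n + 1) ≃ₗ[R] coh R (DP R M d h) 1 :=
    cohEquiv R M d h (n + 1) 1 c (by omega) (by omega) (by omega)
      (hMa _ (by omega)) (hMa _ (by omega))
      (fun i hi => hMa _ (by omega)) (fun i hi => hMa _ (by omega))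
      (fun i hi => hMa _ (by omega))
  refine ⟨E0.symm.isFiniteLength hfin0, E1.symm.isFiniteLength hfin1, ?_⟩
  intro sT sT' sP0 sP1 h1 h2 h3 h4 h5 h6 h7 h8
  have l0 : sT.length = sP0.length := cs_length_eq E0 sT sP0 h1 h2 h5 h6
  have l1 : sT'.length = sP1.length := cs_length_eq E1 sT' sP1 h3 h4 h7 h8
  omega
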